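/- Let a < b be real numbers and let ψ : [a,b] → ℝ be twice differentiable with continuous second derivative. Assume that ψ'' is convex on [a,b], that ψ(a) = ψ(b) = 0, that ψ'(a) > 0 and that ψ'(b) < 0. Then ψ(t) > 0 for every t ∈ (a,b). -/

import Mathlib

open Set

/-- Positivity lemma: if `ψ` is `C²` on `[a,b]` with `ψ''` convex, `ψ(a) = ψ(b) = 0`,
`ψ'(a) > 0` and `ψ'(b) < 0`, then `ψ > 0` on `(a,b)`. -/
theorem positivity_of_profile (a b : ℝ) (hab : a < b)
    (ψ ψ' ψ'' : ℝ → ℝ)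
    (hderiv1 : ∀ t ∈ Set.Icc a b, HasDerivWithinAt ψ (ψ' t) (Set.Icc a b) t)
    (hderiv2 : ∀ t ∈ Set.Icc a b, HasDerivWithinAt ψ' (ψ'' t) (Set.Icc a b) t)
    (hcont : ContinuousOn ψ'' (Set.Icc a b))
    (hconv : ConvexOn ℝ (Set.Icc a b) ψ'')
    (ha : ψ a = 0) (hb : ψ b = 0)
    (ha' : 0 < ψ' a) (hb' : ψ' b < 0) :
    ∀ t ∈ Set.Ioo a b, 0 < ψ t := by
  have hcontψ : ContinuousOn ψ (Icc a b) := fun t ht => (hderiv1 t ht).continuousWithinAt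
  have hcontψ' : ContinuousOn ψ' (Icc a b) := fun t ht => (hderiv2 t ht).continuousWithinAt
  have hψd : ∀ x ∈ Ioo a b, HasDerivAt ψ (ψ' x) x := fun x hx =>
    (hderiv1 x (Ioo_subset_Icc_self hx)).hasDerivAt (Icc_mem_nhds hx.1 hx.2)
  have hψ'd : ∀ x ∈ Ioo a b, HasDerivAt ψ' (ψ'' x) x := fun x hx =>
    (hderiv2 x (Ioo_subset_Icc_self hx)).hasDerivAt (Icc_mem_nhds hx.1 hx.2)
  have hmvt : ∀ x y, a ≤ x → x < y → y ≤ b →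
      ∃ u ∈ Ioo x y, ψ'' u = (ψ' y - ψ' x) / (y - x) := by
    intro x y hax hxy hyb
    exact exists_hasDerivAt_eq_slope ψ' ψ'' hxy
      (hcontψ'.mono (Icc_subset_Icc hax hyb))
      (fun u hu => hψ'd u ⟨lt_of_le_of_lt hax hu.1, lt_of_lt_of_le hu.2 hyb⟩)
  set S : Set ℝ := {t | t ∈ Icc a b ∧ ψ' t ≤ 0} with hS
  have hbS : b ∈ S := ⟨⟨le_of_lt hab, le_refl b⟩, le_of_lt hb'⟩
  have hSne : S.Nonempty := ⟨b, hbS⟩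
  have hSbdd : BddBelow S := ⟨a, fun t ht => ht.1.1⟩
  have hSclosed : IsClosed S := by
    have hSeq : S = Icc a b ∩ ψ' ⁻¹' (Iic 0) := rfl
    rw [hSeq]
    exact hcontψ'.preimage_isClosed_of_isClosed isClosed_Icc isClosed_Iic
  set c := sInf S with hc
  have hcS : c ∈ S := hSclosed.csInf_mem hSne hSbdd
  have hcb : c ≤ b := csInf_le hSbdd hbS
  have hac : a < c := by
    rcases lt_or_eq_of_le hcS.1.1 with h | h
    · exact h
    · exact absurd hcS.2 (by rw [← h]; exact not_le.mpr ha')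
  have hpos : ∀ t, a ≤ t → t < c → 0 < ψ' t := by
    intro t hat htc
    by_contra h
    exact absurd (csInf_le hSbdd ⟨⟨hat, le_trans (le_of_lt htc) hcb⟩, not_lt.mp h⟩)
      (not_le.mpr htc)
  have hneg : ∀ t, c ≤ t → t ≤ b → ψ' t ≤ 0 := by
    intro d hcd hdb
    by_contra h
    push_neg at h
    have hdc : c < d := lt_of_le_of_ne hcd (by rintro rfl; exact absurd hcS.2 (not_le.mpr h))
    have hdb' : d < b := lt_of_le_of_ne hdb
      (by rintro rfl; exact absurd hb' (not_lt.mpr (le_of_lt h)))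
    obtain ⟨w, hw, hw'⟩ := hmvt a c le_rfl hac hcb
    obtain ⟨u, hu, hu'⟩ := hmvt c d (le_of_lt hac) hdc (le_of_lt hdb')
    obtain ⟨v, hv, hv'⟩ := hmvt d b (le_trans (le_of_lt hac) hcd) hdb' le_rfl
    have hwneg : ψ'' w < 0 := by
      rw [hw']
      apply div_neg_of_neg_of_pos _ (by linarith)
      linarith [hcS.2]
    have hupos : 0 < ψ'' u := by
      rw [hu']
      apply div_pos _ (by linarith)
      linarith [hcS.2]
    have hvneg : ψ'' v < 0 := by
      rw [hv']
      apply div_neg_of_neg_of_pos _ (by linarith)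
      linarith
    have hwv : w < v := by linarith [hw.2, hu.1, hu.2, hv.1]
    have huseg : u ∈ segment ℝ w v := by
      rw [segment_eq_Icc (le_of_lt hwv)]
      constructor <;> linarith [hw.2, hu.1, hu.2, hv.1]
    have hle := hconv.le_on_segment ⟨le_of_lt hw.1, by linarith [hw.2]⟩
      ⟨by linarith [hv.1], le_of_lt hv.2⟩ huseg
    rcases max_cases (ψ'' w) (ψ'' v) with ⟨h1, _⟩ | ⟨h1, _⟩ <;> linarith
  have hmono : StrictMonoOn ψ (Icc a c) := by
    apply strictMonoOn_of_deriv_pos (convex_Icc a c)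
      (hcontψ.mono (Icc_subset_Icc le_rfl hcb))
    intro x hx
    rw [interior_Icc] at hx
    rw [(hψd x ⟨hx.1, lt_of_lt_of_le hx.2 hcb⟩).deriv]
    exact hpos x (le_of_lt hx.1) hx.2
  have hanti : AntitoneOn ψ (Icc c b) := by
    apply antitoneOn_of_deriv_nonpos (convex_Icc c b)
      (hcontψ.mono (Icc_subset_Icc (le_of_lt hac) le_rfl))
    · intro x hx
      rw [interior_Icc] at hx
      exact ((hψd x ⟨lt_trans hac hx.1, hx.2⟩).differentiableAt).differentiableWithinAt
    · intro x hx
      rw [interior_Icc] at hx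
      rw [(hψd x ⟨lt_trans hac hx.1, hx.2⟩).deriv]
      exact hneg x (le_of_lt hx.1) (le_of_lt hx.2)
  intro t ht
  rcases le_or_gt t c with htc | hct
  · have := hmono ⟨le_rfl, le_of_lt hac⟩ ⟨le_of_lt ht.1, htc⟩ ht.1
    rwa [ha] at this
  · have hbmem : b ∈ Icc a b := ⟨le_of_lt hab, le_rfl⟩
    have hev : ∀ᶠ x in nhdsWithin b (Icc a b), ψ' x < 0 :=
      (hcontψ' b hbmem).eventually_lt_const hb'
    rw [nhdsWithin_Icc_eq_nhdsLE hab] at hev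
    obtain ⟨l, hl, hlsub⟩ := mem_nhdsLE_iff_exists_Ioc_subset.mp hev
    set s1 := max t l with hs1
    have hs1b : s1 < b := max_lt ht.2 hl
    have hts1 : t ≤ s1 := le_max_left t l
    have has1 : a < s1 := lt_of_lt_of_le ht.1 hts1
    have hcs1 : c ≤ s1 := le_trans (le_of_lt hct) hts1
    have hstrict : StrictAntiOn ψ (Icc s1 b) := by
      apply strictAntiOn_of_deriv_neg (convex_Icc s1 b)
        (hcontψ.mono (Icc_subset_Icc (le_of_lt has1) le_rfl))
      intro x hx
      rw [interior_Icc] at hx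
      rw [(hψd x ⟨lt_trans has1 hx.1, hx.2⟩).deriv]
      exact hlsub ⟨lt_of_le_of_lt (le_max_right t l) hx.1, le_of_lt hx.2⟩
    have h1 : ψ b < ψ s1 := hstrict ⟨le_rfl, le_of_lt hs1b⟩ ⟨le_of_lt hs1b, le_rfl⟩ hs1b
    have h2 : ψ s1 ≤ ψ t := hanti ⟨le_of_lt hct, le_of_lt ht.2⟩ ⟨hcs1, le_of_lt hs1b⟩ hts1
    rw [hb] at h1
    linarith
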